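/- arXiv:2502.20212 — 2 statements merged into one kernel-verified Lean document; each statement's English description precedes it below -/
import Mathlib

section
/- Let Φ : ℝ^{2d} → ℝ^{2d} be differentiable with Jacobian satisfying ‖DΦ(y)^T J DΦ(y) − J‖ ≤ ε for all y, and suppose additionally ‖DΦ(y)‖ ≤ B for all y. Then for every K ≥ 1, the K-fold composition Φ^K satisfies ‖D(Φ^K)(y)^T J D(Φ^K)(y) − J‖ ≤ ε·(1 + B² + B⁴ + ... + B^{2(K−1)}) for all y. -/
open ContinuousLinearMap

/-- The standard symplectic matrix `J = [[0, I], [-I, 0]]`, as a continuous linear map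
on Euclidean space `ℝ^{2d}`. -/
noncomputable def Jclm (d : ℕ) :
    EuclideanSpace ℝ (Fin d ⊕ Fin d) →L[ℝ] EuclideanSpace ℝ (Fin d ⊕ Fin d) :=
  Matrix.toEuclideanCLM (𝕜 := ℝ) (Matrix.fromBlocks 0 1 (-1) 0)

lemma diff_iter {E : Type*} [NormedAddCommGroup E] [NormedSpace ℝ E]
    (Φ : E → E) (hΦ : Differentiable ℝ Φ) : ∀ K : ℕ, Differentiable ℝ Φ^[K] := by
  intro K
  induction K with
  | zero => simpa using differentiable_id
  | succ n ih =>
    rw [Function.iterate_succ']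
    exact hΦ.comp ih

lemma fderiv_iter_succ {E : Type*} [NormedAddCommGroup E] [NormedSpace ℝ E]
    (Φ : E → E) (hΦ : Differentiable ℝ Φ) (K : ℕ) (y : E) :
    fderiv ℝ Φ^[K + 1] y = (fderiv ℝ Φ (Φ^[K] y)) ∘L fderiv ℝ Φ^[K] y := by
  rw [Function.iterate_succ']
  exact fderiv_comp y (hΦ _) (diff_iter Φ hΦ K y)

lemma norm_fderiv_iter {E : Type*} [NormedAddCommGroup E] [NormedSpace ℝ E]
    (Φ : E → E) (hΦ : Differentiable ℝ Φ) (B : ℝ)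
    (hbd : ∀ y, ‖fderiv ℝ Φ y‖ ≤ B) (hB : 0 ≤ B) :
    ∀ K : ℕ, ∀ y, ‖fderiv ℝ Φ^[K] y‖ ≤ B ^ K := by
  intro K
  induction K with
  | zero =>
    intro y
    simpa [Function.iterate_zero] using norm_id_le
  | succ n ih =>
    intro y
    rw [fderiv_iter_succ Φ hΦ n y, pow_succ']
    exact (opNorm_comp_le _ _).trans (mul_le_mul (hbd _) (ih y) (norm_nonneg _) hB)

theorem stmt_5 (d : ℕ)
    (Φ : EuclideanSpace ℝ (Fin d ⊕ Fin d) → EuclideanSpace ℝ (Fin d ⊕ Fin d))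
    (hΦ : Differentiable ℝ Φ) (ε B : ℝ) (hε : 0 ≤ ε) (hB : 0 ≤ B)
    (hps : ∀ y, ‖adjoint (fderiv ℝ Φ y) ∘L Jclm d ∘L fderiv ℝ Φ y - Jclm d‖ ≤ ε)
    (hbd : ∀ y, ‖fderiv ℝ Φ y‖ ≤ B) :
    ∀ K : ℕ, 1 ≤ K → ∀ y,
      ‖adjoint (fderiv ℝ Φ^[K] y) ∘L Jclm d ∘L fderiv ℝ Φ^[K] y - Jclm d‖
        ≤ ε * ∑ i ∈ Finset.range K, B ^ (2 * i) := by
  have main : ∀ K : ℕ, ∀ y,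
      ‖adjoint (fderiv ℝ Φ^[K] y) ∘L Jclm d ∘L fderiv ℝ Φ^[K] y - Jclm d‖
        ≤ ε * ∑ i ∈ Finset.range K, B ^ (2 * i) := by
    intro K
    induction K with
    | zero =>
      intro y
      have : adjoint (fderiv ℝ Φ^[0] y) ∘L Jclm d ∘L fderiv ℝ Φ^[0] y - Jclm d = 0 := by
        simp only [Function.iterate_zero, fderiv_id, adjoint_id, id_comp, comp_id, sub_self]
      rw [this, norm_zero, Finset.range_zero, Finset.sum_empty, mul_zero]
    | succ n ih =>
      intro y
      set C := fderiv ℝ Φ^[n] y with hC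
      set D := fderiv ℝ Φ (Φ^[n] y) with hD
      have hfd : fderiv ℝ Φ^[n + 1] y = D ∘L C := fderiv_iter_succ Φ hΦ n y
      have hadj : adjoint (D ∘L C) = adjoint C ∘L adjoint D := adjoint_comp D C
      have key : adjoint (fderiv ℝ Φ^[n + 1] y) ∘L Jclm d ∘L fderiv ℝ Φ^[n + 1] y - Jclm d
          = adjoint C ∘L (adjoint D ∘L Jclm d ∘L D - Jclm d) ∘L C
            + (adjoint C ∘L Jclm d ∘L C - Jclm d) := by
        rw [hfd, hadj]
        simp only [comp_sub, sub_comp, comp_assoc]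
        abel
      rw [key]
      have hCn : ‖C‖ ≤ B ^ n := norm_fderiv_iter Φ hΦ B hbd hB n y
      have h1 : ‖adjoint C ∘L (adjoint D ∘L Jclm d ∘L D - Jclm d) ∘L C‖ ≤ B ^ n * ε * B ^ n := by
        calc ‖adjoint C ∘L (adjoint D ∘L Jclm d ∘L D - Jclm d) ∘L C‖
            ≤ ‖adjoint C‖ * ‖(adjoint D ∘L Jclm d ∘L D - Jclm d) ∘L C‖ := opNorm_comp_le _ _
          _ ≤ ‖adjoint C‖ * (‖adjoint D ∘L Jclm d ∘L D - Jclm d‖ * ‖C‖) := by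
              gcongr; exact opNorm_comp_le _ _
          _ ≤ B ^ n * (ε * B ^ n) := by
              rw [LinearIsometryEquiv.norm_map (adjoint : _ ≃ₗᵢ⋆[ℝ] _) C]
              have := hps (Φ^[n] y)
              gcongr
          _ = B ^ n * ε * B ^ n := by ring
      calc ‖adjoint C ∘L (adjoint D ∘L Jclm d ∘L D - Jclm d) ∘L C
              + (adjoint C ∘L Jclm d ∘L C - Jclm d)‖
          ≤ ‖adjoint C ∘L (adjoint D ∘L Jclm d ∘L D - Jclm d) ∘L C‖
            + ‖adjoint C ∘L Jclm d ∘L C - Jclm d‖ := norm_add_le _ _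
        _ ≤ B ^ n * ε * B ^ n + ε * ∑ i ∈ Finset.range n, B ^ (2 * i) := by
            exact add_le_add h1 (ih y)
        _ = ε * ∑ i ∈ Finset.range (n + 1), B ^ (2 * i) := by
            rw [Finset.sum_range_succ]
            ring_nf
  intro K _ y
  exact main K y
end

section
/- Let ε < 1 and let A be a 2d×2d real matrix with ‖Aᵀ J A − J‖₂ ≤ ε. Then A is invertible and ‖A^{-1}‖₂ ≤ ‖A‖₂ / (1 − ε). -/
open Matrix

open scoped Matrix.Norms.L2Operator

/-- The standard symplectic matrix `J = [[0, I], [-I, 0]]` in `d × d` blocks. -/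
noncomputable def Jmat (d : ℕ) : Matrix (Fin d ⊕ Fin d) (Fin d ⊕ Fin d) ℝ :=
  Matrix.fromBlocks 0 1 (-1) 0

lemma Jmat_transpose_mul (d : ℕ) : (Jmat d)ᵀ * Jmat d = 1 := by
  simp [Jmat, Matrix.fromBlocks_transpose, Matrix.fromBlocks_multiply,
    Matrix.fromBlocks_one]

lemma Jmat_mul_transpose (d : ℕ) : Jmat d * (Jmat d)ᵀ = 1 := by
  simp [Jmat, Matrix.fromBlocks_transpose, Matrix.fromBlocks_multiply,
    Matrix.fromBlocks_one]

theorem stmt_18 (d : ℕ) (ε : ℝ) (hε : ε < 1)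
    (A : Matrix (Fin d ⊕ Fin d) (Fin d ⊕ Fin d) ℝ)
    (h : ‖Aᵀ * Jmat d * A - Jmat d‖ ≤ ε) :
    IsUnit A ∧ ‖A⁻¹‖ ≤ ‖A‖ / (1 - ε) := by
  rcases Nat.eq_zero_or_pos d with hd | hd
  · subst hd
    have hA : A = 1 := Subsingleton.elim _ _
    constructor
    · exact hA ▸ isUnit_one
    · have h1 : A⁻¹ = 0 := Subsingleton.elim _ _
      rw [h1, norm_zero]
      exact div_nonneg (norm_nonneg _) (by linarith)
  · -- main case
    haveI : Nonempty (Fin d ⊕ Fin d) := ⟨Sum.inl ⟨0, hd⟩⟩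
    set J := Jmat d with hJdef
    have hJt : ∀ B : Matrix (Fin d ⊕ Fin d) (Fin d ⊕ Fin d) ℝ, ‖Bᵀ‖ = ‖B‖ := by
      intro B
      have := Matrix.l2_opNorm_conjTranspose (𝕜 := ℝ) B
      rwa [Matrix.conjTranspose_eq_transpose_of_trivial] at this
    -- norm of the identity is 1
    have hone : ‖(1 : Matrix (Fin d ⊕ Fin d) (Fin d ⊕ Fin d) ℝ)‖ = 1 := by
      have h2 := Matrix.l2_opNorm_conjTranspose_mul_self
        (𝕜 := ℝ) (1 : Matrix (Fin d ⊕ Fin d) (Fin d ⊕ Fin d) ℝ)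
      simp only [Matrix.conjTranspose_one, one_mul] at h2
      have h3 : (1 : ℝ) ≤ ‖(1 : Matrix (Fin d ⊕ Fin d) (Fin d ⊕ Fin d) ℝ)‖ :=
        one_le_norm_one _
      nlinarith
    have hJnorm : ‖J‖ = 1 := by
      have h2 := Matrix.l2_opNorm_conjTranspose_mul_self (𝕜 := ℝ) J
      rw [Matrix.conjTranspose_eq_transpose_of_trivial, Jmat_transpose_mul, hone] at h2
      have h3 : 0 ≤ ‖J‖ := norm_nonneg _
      nlinarith
    have hJtnorm : ‖Jᵀ‖ = 1 := by rw [hJt]; exact hJnorm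
    set E := Jᵀ * (Aᵀ * J * A - J) with hEdef
    have hEnorm : ‖E‖ ≤ ε := by
      calc ‖E‖ ≤ ‖Jᵀ‖ * ‖Aᵀ * J * A - J‖ := Matrix.l2_opNorm_mul _ _
      _ = ‖Aᵀ * J * A - J‖ := by rw [hJtnorm, one_mul]
      _ ≤ ε := h
    have hEn1 : ‖-E‖ < 1 := by rw [norm_neg]; linarith
    have hfact : Aᵀ * J * A = J * (1 + E) := by
      rw [hEdef, mul_add, mul_one, ← mul_assoc, Jmat_mul_transpose, one_mul]
      noncomm_ring
    set u : (Matrix (Fin d ⊕ Fin d) (Fin d ⊕ Fin d) ℝ)ˣ := Units.oneSub (-E) hEn1 with hu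
    have huval : (u : Matrix (Fin d ⊕ Fin d) (Fin d ⊕ Fin d) ℝ) = 1 + E := by
      simp [hu, sub_neg_eq_add]
    set C : Matrix (Fin d ⊕ Fin d) (Fin d ⊕ Fin d) ℝ := ↑u⁻¹ with hC
    have hleft : (C * Jᵀ * Aᵀ * J) * A = 1 := by
      calc (C * Jᵀ * Aᵀ * J) * A = C * Jᵀ * (Aᵀ * J * A) := by noncomm_ring
      _ = C * Jᵀ * (J * (1 + E)) := by rw [hfact]
      _ = C * (Jᵀ * J) * (1 + E) := by noncomm_ring
      _ = C * (1 + E) := by rw [Jmat_transpose_mul, mul_one]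
      _ = 1 := by rw [hC, ← huval]; exact u.inv_mul
    refine ⟨(Matrix.isUnit_iff_isUnit_det A).mpr (Matrix.isUnit_det_of_left_inverse hleft), ?_⟩
    have hAinv : A⁻¹ = C * Jᵀ * Aᵀ * J := Matrix.inv_eq_left_inv hleft
    have hCnorm : ‖C‖ ≤ (1 - ε)⁻¹ := by
      have h4 : C = ∑' n : ℕ, (-E) ^ n := rfl
      have h5 := tsum_geometric_le_of_norm_lt_one (-E) hEn1
      rw [hone, norm_neg] at h5
      rw [h4]
      calc ‖∑' n : ℕ, (-E) ^ n‖ ≤ 1 - 1 + (1 - ‖E‖)⁻¹ := h5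
      _ = (1 - ‖E‖)⁻¹ := by ring
      _ ≤ (1 - ε)⁻¹ := by
        apply inv_anti₀ (by linarith)
        linarith
    have hbound : ‖A⁻¹‖ ≤ ‖C‖ * ‖A‖ := by
      rw [hAinv]
      calc ‖C * Jᵀ * Aᵀ * J‖ ≤ ‖C * Jᵀ * Aᵀ‖ * ‖J‖ := Matrix.l2_opNorm_mul _ _
      _ = ‖C * Jᵀ * Aᵀ‖ := by rw [hJnorm, mul_one]
      _ ≤ ‖C * Jᵀ‖ * ‖Aᵀ‖ := Matrix.l2_opNorm_mul _ _
      _ ≤ ‖C‖ * ‖Jᵀ‖ * ‖Aᵀ‖ :=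
        mul_le_mul_of_nonneg_right (Matrix.l2_opNorm_mul _ _) (norm_nonneg _)
      _ = ‖C‖ * ‖A‖ := by rw [hJtnorm, mul_one, hJt]
    rw [div_eq_mul_inv, mul_comm ‖A‖]
    calc ‖A⁻¹‖ ≤ ‖C‖ * ‖A‖ := hbound
    _ ≤ (1 - ε)⁻¹ * ‖A‖ := mul_le_mul_of_nonneg_right hCnorm (norm_nonneg _)
end
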